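/- Let T > 0, let ξ : ℝ → ℝ be continuous on [0, T], and let W, Z : ℝ → ℂ be functions such that for every t ∈ [0, T]: Im(W t) > 0, Im(Z t) > 0, W t ≠ Z t, W has derivative 2/(W t − ξ t) at t, and Z has derivative 2/(Z t − ξ t) at t. Define G(t) := −(1/2π)·log|(W t − Z t)/(W t − conj(Z t))|, P_W(t) := −(1/π)·Im(1/(W t − ξ t)), and P_Z(t) := −(1/π)·Im(1/(Z t − ξ t)). Then P_W(t) > 0 and P_Z(t) > 0 for all t, G(T) ≥ 0, and 2π·∫₀^T P_W(t)·P_Z(t) dt = G(0) − G(T) ≤ G(0). -/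

import Mathlib

/-- Green function of the evolving domain in the half-plane chart:
`G(t) = -(1/2π)·log|(W t - Z t)/(W t - conj (Z t))|`. -/
noncomputable def GreenT (W Z : ℝ → ℂ) (t : ℝ) : ℝ :=
  -(1 / (2 * Real.pi)) *
    Real.log ‖(W t - Z t) / (W t - (starRingEnd ℂ) (Z t))‖

/-- Poisson kernel at the tip in the half-plane chart:
`P_W(t) = -(1/π)·Im(1/(W t - ξ t))`. -/
noncomputable def PoisT (ξ : ℝ → ℝ) (W : ℝ → ℂ) (t : ℝ) : ℝ :=
  -(1 / Real.pi) * ((W t - (ξ t : ℂ))⁻¹).im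

lemma sub_ofReal_ne_zero' {w : ℂ} (hw : 0 < w.im) (x : ℝ) : w - (x : ℂ) ≠ 0 := by
  intro h
  have := congrArg Complex.im h
  simp at this
  linarith

lemma hasDerivAt_log_complexAbs {f : ℝ → ℂ} {f' : ℂ} {t : ℝ}
    (hf : HasDerivAt f f' t) (h0 : f t ≠ 0) :
    HasDerivAt (fun s => Real.log ‖f s‖) ((f' / f t).re) t := by
  have hre : HasDerivAt (fun s => (f s).re) f'.re t :=
    Complex.reCLM.hasFDerivAt.comp_hasDerivAt t hf
  have him : HasDerivAt (fun s => (f s).im) f'.im t :=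
    Complex.imCLM.hasFDerivAt.comp_hasDerivAt t hf
  have hg : HasDerivAt (fun s => Complex.normSq (f s))
      (f'.re * (f t).re + (f t).re * f'.re + (f'.im * (f t).im + (f t).im * f'.im)) t := by
    have := (hre.mul hre).add (him.mul him)
    simp only [Complex.normSq_apply]
    exact this
  have hns : Complex.normSq (f t) ≠ 0 := by
    simpa [Complex.normSq_eq_zero] using h0
  have hlog := (Real.hasDerivAt_log hns).comp t hg
  have heq : (fun s => Real.log ‖f s‖)
      = fun s => Real.log (Complex.normSq (f s)) / 2 := by
    funext s
    rw [Complex.norm_def, Real.log_sqrt (Complex.normSq_nonneg _)]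
  rw [heq]
  refine (hlog.div_const 2).congr_deriv ?_
  rw [Complex.div_re]
  field_simp
  ring

lemma green_deriv {ξ : ℝ → ℝ} {W Z : ℝ → ℂ} {t : ℝ}
    (hWim : 0 < (W t).im) (hZim : 0 < (Z t).im) (hWZ : W t ≠ Z t)
    (hW' : HasDerivAt W (2 / (W t - (ξ t : ℂ))) t)
    (hZ' : HasDerivAt Z (2 / (Z t - (ξ t : ℂ))) t) :
    HasDerivAt (GreenT W Z) (-(2 * Real.pi) * (PoisT ξ W t * PoisT ξ Z t)) t := by
  set a : ℂ := W t - (ξ t : ℂ) with ha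
  set b : ℂ := Z t - (ξ t : ℂ) with hb
  have ha0 : a ≠ 0 := sub_ofReal_ne_zero' hWim _
  have hb0 : b ≠ 0 := sub_ofReal_ne_zero' hZim _
  have hcb0 : (starRingEnd ℂ) b ≠ 0 := by simpa using hb0
  have hu' : HasDerivAt (fun s => W s - Z s) (2 / a - 2 / b) t := hW'.sub hZ'
  have hu0 : W t - Z t ≠ 0 := sub_ne_zero.2 hWZ
  have hZconj : HasDerivAt (fun s => (starRingEnd ℂ) (Z s)) ((starRingEnd ℂ) (2 / b)) t := by
    simpa [Function.comp_def, Complex.conjCAE_apply] using (Complex.conjCLE.toContinuousLinearMap.hasFDerivAt.comp_hasDerivAt t hZ')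
  have hv' : HasDerivAt (fun s => W s - (starRingEnd ℂ) (Z s))
      (2 / a - (starRingEnd ℂ) (2 / b)) t := hW'.sub hZconj
  have hv0 : W t - (starRingEnd ℂ) (Z t) ≠ 0 := by
    intro h
    have := congrArg Complex.im h
    simp [Complex.sub_im, Complex.conj_im] at this
    linarith
  have h1 := hasDerivAt_log_complexAbs hu' hu0
  have h2 := hasDerivAt_log_complexAbs hv' hv0
  have hD := ((h1.sub h2).const_mul (-(1 / (2 * Real.pi))))
  have hev : (fun s => -(1 / (2 * Real.pi)) *
      (Real.log ‖W s - Z s‖ - Real.log ‖W s - (starRingEnd ℂ) (Z s)‖))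
      =ᶠ[nhds t] GreenT W Z := by
    filter_upwards [hu'.continuousAt.eventually_ne hu0, hv'.continuousAt.eventually_ne hv0]
      with s hsu hsv
    unfold GreenT
    rw [norm_div, Real.log_div (norm_ne_zero_iff.mpr hsu) (norm_ne_zero_iff.mpr hsv)]
  have hD' := hD.congr_of_eventuallyEq hev.symm
  refine hD'.congr_deriv ?_
  have hab : W t - Z t = a - b := by rw [ha, hb]; ring
  have hcb : (starRingEnd ℂ) (Z t) - (ξ t : ℂ) = (starRingEnd ℂ) b := by
    rw [hb]; simp [map_sub, Complex.conj_ofReal]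
  have hacb : W t - (starRingEnd ℂ) (Z t) = a - (starRingEnd ℂ) b := by
    rw [ha, ← hcb]; ring
  have hu0' : a - b ≠ 0 := hab ▸ hu0
  have hv0' : a - (starRingEnd ℂ) b ≠ 0 := hacb ▸ hv0
  have hA : (2 / a - 2 / b) / (W t - Z t) = -2 * (a⁻¹ * b⁻¹) := by
    rw [hab]
    field_simp
    ring
  have hB : (2 / a - (starRingEnd ℂ) (2 / b)) / (W t - (starRingEnd ℂ) (Z t))
      = -2 * (a⁻¹ * ((starRingEnd ℂ) b)⁻¹) := by
    rw [hacb, map_div₀]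
    simp only [map_ofNat]
    field_simp
    ring
  rw [hA, hB]
  have hinv : ((starRingEnd ℂ) b)⁻¹ = (starRingEnd ℂ) b⁻¹ := (map_inv₀ (starRingEnd ℂ) b).symm
  rw [hinv]
  simp only [PoisT, ← ha, ← hb]
  simp only [Complex.mul_re, Complex.mul_im, Complex.neg_re, Complex.neg_im,
    Complex.conj_re, Complex.conj_im, Complex.re_ofNat, Complex.im_ofNat]
  have hπ := Real.pi_ne_zero
  field_simp
  ring

lemma poisT_pos {ξ : ℝ → ℝ} {W : ℝ → ℂ} {t : ℝ} (hw : 0 < (W t).im) : 0 < PoisT ξ W t := by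
  have hne := sub_ofReal_ne_zero' hw (ξ t)
  have hns : 0 < Complex.normSq (W t - (ξ t : ℂ)) := Complex.normSq_pos.2 hne
  have him : (W t - (ξ t : ℂ)).im = (W t).im := by simp
  have : PoisT ξ W t = (W t).im / (Real.pi * Complex.normSq (W t - (ξ t : ℂ))) := by
    rw [PoisT, Complex.inv_im, him]
    field_simp
  rw [this]
  exact div_pos hw (mul_pos Real.pi_pos hns)

lemma greenT_nonneg {W Z : ℝ → ℂ} {t : ℝ} (hw : 0 < (W t).im) (hz : 0 < (Z t).im) :
    0 ≤ GreenT W Z t := by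
  have habs : ‖W t - Z t‖ ≤ ‖W t - (starRingEnd ℂ) (Z t)‖ := by
    rw [Complex.norm_def, Complex.norm_def]
    apply Real.sqrt_le_sqrt
    simp only [Complex.normSq_apply, Complex.sub_re, Complex.sub_im, Complex.conj_re,
      Complex.conj_im]
    nlinarith [hw, hz]
  have hr : ‖(W t - Z t) / (W t - (starRingEnd ℂ) (Z t))‖ ≤ 1 := by
    rw [norm_div]
    exact div_le_one_of_le₀ habs (norm_nonneg _)
  have hlog : Real.log ‖(W t - Z t) / (W t - (starRingEnd ℂ) (Z t))‖ ≤ 0 :=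
    Real.log_nonpos (norm_nonneg _) hr
  have hc : (0:ℝ) < 1 / (2 * Real.pi) := by positivity
  unfold GreenT
  nlinarith [mul_nonneg hc.le (neg_nonneg.2 hlog)]

/-- **integrated Hadamard formula.** Let `T > 0`, `ξ : ℝ → ℝ` continuous
on `[0,T]`, and `W, Z : ℝ → ℂ` with, for every `t ∈ [0,T]`: `Im(W t) > 0`,
`Im(Z t) > 0`, `W t ≠ Z t`, and the Loewner ODEs `W' t = 2/(W t - ξ t)`,
`Z' t = 2/(Z t - ξ t)`. Then `P_W, P_Z > 0` on `[0,T]`, `G(T) ≥ 0`, and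
`2π·∫₀^T P_W(t)·P_Z(t) dt = G(0) - G(T) ≤ G(0)`. -/
theorem statement13 (T : ℝ) (hT : 0 < T) (ξ : ℝ → ℝ)
    (hξ : ContinuousOn ξ (Set.Icc 0 T)) (W Z : ℝ → ℂ)
    (hW : ∀ t ∈ Set.Icc 0 T, 0 < (W t).im) (hZ : ∀ t ∈ Set.Icc 0 T, 0 < (Z t).im)
    (hWZ : ∀ t ∈ Set.Icc 0 T, W t ≠ Z t)
    (hW' : ∀ t ∈ Set.Icc 0 T, HasDerivAt W (2 / (W t - (ξ t : ℂ))) t)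
    (hZ' : ∀ t ∈ Set.Icc 0 T, HasDerivAt Z (2 / (Z t - (ξ t : ℂ))) t) :
    (∀ t ∈ Set.Icc 0 T, 0 < PoisT ξ W t ∧ 0 < PoisT ξ Z t) ∧
    0 ≤ GreenT W Z T ∧
    2 * Real.pi * ∫ t in (0 : ℝ)..T, PoisT ξ W t * PoisT ξ Z t
      = GreenT W Z 0 - GreenT W Z T ∧
    2 * Real.pi * ∫ t in (0 : ℝ)..T, PoisT ξ W t * PoisT ξ Z t
      ≤ GreenT W Z 0 := by
  have hTmem : T ∈ Set.Icc (0:ℝ) T := ⟨hT.le, le_refl T⟩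
  have h0mem : (0:ℝ) ∈ Set.Icc (0:ℝ) T := ⟨le_refl 0, hT.le⟩
  -- positivity of Poisson kernels
  have hP : ∀ t ∈ Set.Icc 0 T, 0 < PoisT ξ W t ∧ 0 < PoisT ξ Z t := fun t ht =>
    ⟨poisT_pos (hW t ht), poisT_pos (hZ t ht)⟩
  -- nonnegativity of G(T)
  have hGT : 0 ≤ GreenT W Z T := greenT_nonneg (hW T hTmem) (hZ T hTmem)
  -- continuity of the integrand
  have hcontξ : ContinuousOn (fun t => ((ξ t : ℂ))) (Set.Icc 0 T) :=
    Complex.continuous_ofReal.comp_continuousOn hξ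
  have hcontW : ContinuousOn W (Set.Icc 0 T) := fun t ht =>
    (hW' t ht).continuousAt.continuousWithinAt
  have hcontZ : ContinuousOn Z (Set.Icc 0 T) := fun t ht =>
    (hZ' t ht).continuousAt.continuousWithinAt
  have hcontPW : ContinuousOn (PoisT ξ W) (Set.Icc 0 T) := by
    apply continuousOn_const.mul
    exact Complex.continuous_im.comp_continuousOn
      (((hcontW.sub hcontξ)).inv₀ (fun t ht => sub_ofReal_ne_zero' (hW t ht) _))
  have hcontPZ : ContinuousOn (PoisT ξ Z) (Set.Icc 0 T) := by
    apply continuousOn_const.mul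
    exact Complex.continuous_im.comp_continuousOn
      (((hcontZ.sub hcontξ)).inv₀ (fun t ht => sub_ofReal_ne_zero' (hZ t ht) _))
  have hcont : ContinuousOn
      (fun t => -(2 * Real.pi) * (PoisT ξ W t * PoisT ξ Z t)) (Set.Icc 0 T) :=
    continuousOn_const.mul (hcontPW.mul hcontPZ)
  have hint : IntervalIntegrable
      (fun t => -(2 * Real.pi) * (PoisT ξ W t * PoisT ξ Z t)) MeasureTheory.volume 0 T := by
    apply ContinuousOn.intervalIntegrable
    rwa [Set.uIcc_of_le hT.le]
  -- FTC
  have hderiv : ∀ t ∈ Set.uIcc (0:ℝ) T,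
      HasDerivAt (GreenT W Z) (-(2 * Real.pi) * (PoisT ξ W t * PoisT ξ Z t)) t := by
    intro t ht
    rw [Set.uIcc_of_le hT.le] at ht
    exact green_deriv (hW t ht) (hZ t ht) (hWZ t ht) (hW' t ht) (hZ' t ht)
  have hFTC := intervalIntegral.integral_eq_sub_of_hasDerivAt hderiv hint
  have hconst : ∫ t in (0:ℝ)..T, -(2 * Real.pi) * (PoisT ξ W t * PoisT ξ Z t)
      = -(2 * Real.pi) * ∫ t in (0:ℝ)..T, PoisT ξ W t * PoisT ξ Z t :=
    intervalIntegral.integral_const_mul _ _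
  rw [hconst] at hFTC
  have hEq : 2 * Real.pi * ∫ t in (0:ℝ)..T, PoisT ξ W t * PoisT ξ Z t
      = GreenT W Z 0 - GreenT W Z T := by linarith
  exact ⟨hP, hGT, hEq, by linarith⟩
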